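/- arXiv:2401.10470 — 2 statements merged into one kernel-verified Lean document; each statement's English description precedes it below -/
import Mathlib

section
/- Let q ≥ 2 be an integer, let m be a positive even integer, let g be the (m+1)×(m+1) real matrix defined in the context, and set σ := q^{-m/2}·g. Then there exists an invertible real (m+1)×(m+1) matrix T such that σ = T⁻¹ · diag(1,…,1,−1,…,−1) · T, where the diagonal matrix has m/2+1 entries equal to 1 followed by m/2 entries equal to −1. -/
open Matrix Finset

/-- The (m+1)×(m+1) real matrix `g` from the MacWilliams identity for NRT codes. -/
def gMat (q m : ℕ) : Matrix (Fin (m + 1)) (Fin (m + 1)) ℝ := fun s t =>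
  if t.val = 0 then 1
  else if s.val + t.val ≤ m then (q : ℝ) ^ (t.val - 1) * ((q : ℝ) - 1)
  else if s.val + t.val = m + 1 then -(q : ℝ) ^ (t.val - 1)
  else 0

/-- ℕ-indexed entries of `gMat`. -/
def gEnt (q m s t : ℕ) : ℝ :=
  if t = 0 then 1
  else if s + t ≤ m then (q : ℝ) ^ (t - 1) * ((q : ℝ) - 1)
  else if s + t = m + 1 then -(q : ℝ) ^ (t - 1)
  else 0

lemma gMat_eq (q m : ℕ) (s t : Fin (m + 1)) : gMat q m s t = gEnt q m s.val t.val := rfl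

lemma sum_gEnt_le (q m s : ℕ) : ∀ k, s + k ≤ m →
    ∑ t ∈ range (k + 1), gEnt q m s t = (q : ℝ) ^ k := by
  intro k
  induction k with
  | zero => intro _; simp [gEnt]
  | succ k ih =>
    intro h
    rw [Finset.sum_range_succ, ih (by omega)]
    have : gEnt q m s (k + 1) = (q : ℝ) ^ k * ((q : ℝ) - 1) := by
      simp only [gEnt, if_neg (by omega : ¬ k + 1 = 0), if_pos h, Nat.add_sub_cancel]
    rw [this, pow_succ]; ring

lemma sum_gEnt_zero (q m s : ℕ) (hs : s ≤ m) : ∀ k, m + 1 ≤ s + k →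
    ∑ t ∈ range (k + 1), gEnt q m s t = 0 := by
  intro k
  induction k with
  | zero => omega
  | succ k ih =>
    intro h
    rw [Finset.sum_range_succ]
    rcases Nat.lt_or_ge (s + k) m with hlt | hge
    · omega
    rcases Nat.eq_or_lt_of_le hge with heq | hgt
    · -- s + k = m, so s + (k+1) = m + 1
      rw [sum_gEnt_le q m s k (by omega)]
      have : gEnt q m s (k + 1) = -(q : ℝ) ^ k := by
        simp only [gEnt, if_neg (by omega : ¬ k + 1 = 0), if_neg (by omega : ¬ s + (k+1) ≤ m),
          if_pos (by omega : s + (k + 1) = m + 1), Nat.add_sub_cancel]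
      rw [this]; ring
    · rw [ih (by omega)]
      have : gEnt q m s (k + 1) = 0 := by
        simp only [gEnt, if_neg (by omega : ¬ k + 1 = 0), if_neg (by omega : ¬ s + (k+1) ≤ m),
          if_neg (by omega : ¬ s + (k + 1) = m + 1)]
      rw [this]; ring

lemma sum_gEnt (q m s : ℕ) (hs : s ≤ m) (k : ℕ) :
    ∑ t ∈ range (k + 1), gEnt q m s t = if s + k ≤ m then (q : ℝ) ^ k else 0 := by
  split_ifs with h
  · exact sum_gEnt_le q m s k h
  · exact sum_gEnt_zero q m s hs k (by omega)

/-- The key involution identity `g * g = q^m • 1`. -/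
lemma gMat_mul_gMat (q m : ℕ) : gMat q m * gMat q m = ((q : ℝ) ^ m) • 1 := by
  ext s u
  rw [Matrix.mul_apply]
  simp only [gMat_eq]
  rw [Fin.sum_univ_eq_sum_range (fun t => gEnt q m s.val t * gEnt q m t u.val)]
  have hrhs : (((q : ℝ) ^ m) • (1 : Matrix (Fin (m+1)) (Fin (m+1)) ℝ)) s u
      = if s.val = u.val then (q : ℝ) ^ m else 0 := by
    rw [Matrix.smul_apply, Matrix.one_apply]
    rcases eq_or_ne s u with h | h
    · rw [if_pos h, if_pos (by rw [h]), smul_eq_mul, mul_one]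
    · rw [if_neg h, if_neg (by simpa [Fin.ext_iff] using h), smul_eq_mul, mul_zero]
  rw [hrhs]
  obtain ⟨s, hsval⟩ := s
  obtain ⟨u, huval⟩ := u
  simp only []
  have hs : s ≤ m := by omega
  have hu : u ≤ m := by omega
  rcases Nat.eq_zero_or_pos u with hu0 | hu1
  · -- column 0
    subst hu0
    have hone : ∀ t, gEnt q m s t * gEnt q m t 0 = gEnt q m s t := by
      intro t; simp [gEnt]
    rw [Finset.sum_congr rfl (fun t _ => hone t)]
    rw [sum_gEnt q m s hs m]
    rcases Nat.eq_zero_or_pos s with h | h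
    · subst h; rw [if_pos (by omega), if_pos rfl]
    · rw [if_neg (by omega), if_neg (by omega)]
  · -- column u ≥ 1
    have hsplit : ∑ t ∈ range (m + 1), gEnt q m s t * gEnt q m t u
        = (∑ t ∈ range (m + 1 - u), gEnt q m s t * gEnt q m t u)
          + ∑ t ∈ Ico (m + 1 - u) (m + 1), gEnt q m s t * gEnt q m t u := by
      rw [Finset.range_eq_Ico (a := m + 1), Finset.range_eq_Ico (a := m + 1 - u)]
      exact (Finset.sum_Ico_consecutive (fun t => gEnt q m s t * gEnt q m t u) (Nat.zero_le _) (by omega : m + 1 - u ≤ m + 1)).symm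
    rw [hsplit]
    have h1 : ∑ t ∈ range (m + 1 - u), gEnt q m s t * gEnt q m t u
        = (q : ℝ) ^ (u - 1) * ((q : ℝ) - 1) * ∑ t ∈ range (m + 1 - u), gEnt q m s t := by
      rw [Finset.mul_sum]
      refine Finset.sum_congr rfl (fun t ht => ?_)
      rw [Finset.mem_range] at ht
      have hgt : gEnt q m t u = (q : ℝ) ^ (u - 1) * ((q : ℝ) - 1) := by
        simp only [gEnt, if_neg (by omega : ¬ u = 0), if_pos (by omega : t + u ≤ m)]
      rw [hgt]; ring
    have h2 : ∑ t ∈ Ico (m + 1 - u) (m + 1), gEnt q m s t * gEnt q m t u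
        = gEnt q m s (m + 1 - u) * (-(q : ℝ) ^ (u - 1)) := by
      rw [Finset.sum_eq_single_of_mem (m + 1 - u) (by rw [Finset.mem_Ico]; omega)]
      · congr 1
        simp only [gEnt, if_neg (by omega : ¬ u = 0),
          if_neg (by omega : ¬ (m + 1 - u) + u ≤ m), if_pos (by omega : (m + 1 - u) + u = m + 1)]
      · intro t ht hne
        rw [Finset.mem_Ico] at ht
        have hz : gEnt q m t u = 0 := by
          simp only [gEnt, if_neg (by omega : ¬ u = 0), if_neg (by omega : ¬ t + u ≤ m),
            if_neg (by omega : ¬ t + u = m + 1)]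
        rw [hz, mul_zero]
    rw [h1, h2]
    have hmu : m + 1 - u = (m - u) + 1 := by omega
    rw [hmu, sum_gEnt q m s hs (m - u)]
    have hpow : (q : ℝ) ^ (u - 1) * (q : ℝ) ^ (m - u) * (q : ℝ) = (q : ℝ) ^ m := by
      rw [← pow_add, ← pow_succ]
      congr 1; omega
    rcases Nat.lt_trichotomy s u with hlt | heq | hgt
    · rw [if_pos (by omega : s + (m - u) ≤ m), if_neg (by omega : ¬ s = u)]
      have hg : gEnt q m s ((m - u) + 1) = (q : ℝ) ^ (m - u) * ((q : ℝ) - 1) := by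
        simp only [gEnt, if_neg (by omega : ¬ (m - u) + 1 = 0),
          if_pos (by omega : s + ((m - u) + 1) ≤ m), Nat.add_sub_cancel]
      rw [hg]; ring
    · rw [if_pos (by omega : s + (m - u) ≤ m), if_pos heq]
      have hg : gEnt q m s ((m - u) + 1) = -(q : ℝ) ^ (m - u) := by
        simp only [gEnt, if_neg (by omega : ¬ (m - u) + 1 = 0),
          if_neg (by omega : ¬ s + ((m - u) + 1) ≤ m),
          if_pos (by omega : s + ((m - u) + 1) = m + 1), Nat.add_sub_cancel]
      rw [hg]
      linear_combination hpow
    · rw [if_neg (by omega : ¬ s + (m - u) ≤ m), if_neg (by omega : ¬ s = u)]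
      have hg : gEnt q m s ((m - u) + 1) = 0 := by
        simp only [gEnt, if_neg (by omega : ¬ (m - u) + 1 = 0),
          if_neg (by omega : ¬ s + ((m - u) + 1) ≤ m),
          if_neg (by omega : ¬ s + ((m - u) + 1) = m + 1)]
      rw [hg]; ring

lemma sum_gEnt_diag (q m : ℕ) : ∀ k, k + k ≤ m →
    ∑ s ∈ range (k + 1), gEnt q m s s = (q : ℝ) ^ k := by
  intro k
  induction k with
  | zero => intro _; simp [gEnt]
  | succ k ih =>
    intro h
    rw [Finset.sum_range_succ, ih (by omega)]
    have : gEnt q m (k + 1) (k + 1) = (q : ℝ) ^ k * ((q : ℝ) - 1) := by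
      simp only [gEnt, if_neg (by omega : ¬ k + 1 = 0), if_pos (by omega : (k+1) + (k+1) ≤ m),
        Nat.add_sub_cancel]
    rw [this, pow_succ]; ring

/-- The trace of `g` is `q^{m/2}` when `m` is even. -/
lemma gMat_trace (q m : ℕ) (hme : Even m) : (gMat q m).trace = (q : ℝ) ^ (m / 2) := by
  have hdvd : 2 ∣ m := hme.two_dvd
  have hm2 : m / 2 + m / 2 = m := by omega
  rw [Matrix.trace]
  simp only [Matrix.diag, gMat_eq]
  rw [Fin.sum_univ_eq_sum_range (fun s => gEnt q m s s)]
  have hsplit : ∑ s ∈ range (m + 1), gEnt q m s s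
      = (∑ s ∈ range (m / 2 + 1), gEnt q m s s)
        + ∑ s ∈ Ico (m / 2 + 1) (m + 1), gEnt q m s s := by
    rw [Finset.range_eq_Ico (a := m + 1), Finset.range_eq_Ico (a := m / 2 + 1)]
    exact (Finset.sum_Ico_consecutive (fun s => gEnt q m s s) (Nat.zero_le _) (by omega : m / 2 + 1 ≤ m + 1)).symm
  rw [hsplit, sum_gEnt_diag q m (m / 2) (by omega)]
  have : ∑ s ∈ Ico (m / 2 + 1) (m + 1), gEnt q m s s = 0 := by
    refine Finset.sum_eq_zero (fun s hs => ?_)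
    rw [Finset.mem_Ico] at hs
    simp only [gEnt, if_neg (by omega : ¬ s = 0), if_neg (by omega : ¬ s + s ≤ m),
      if_neg (by omega : ¬ s + s = m + 1)]
  rw [this, add_zero]

/-- Any real involutory matrix with trace `2k - n` is conjugate to
`diag(1,…,1 (k times),−1,…,−1)`. -/
lemma invol_conj {n k : ℕ} (A : Matrix (Fin n) (Fin n) ℝ) (h2 : A * A = 1)
    (htr : A.trace = 2 * (k : ℝ) - (n : ℝ)) :
    ∃ T : Matrix (Fin n) (Fin n) ℝ, IsUnit T ∧
      A = T⁻¹ * Matrix.diagonal (fun i : Fin n => if i.val < k then (1 : ℝ) else -1) * T := by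
  set f : (Fin n → ℝ) →ₗ[ℝ] (Fin n → ℝ) := Matrix.toLin' A with hf
  have hcomp : f ∘ₗ f = LinearMap.id := by
    rw [hf, ← Matrix.toLin'_mul, h2, Matrix.toLin'_one]
  have hff : ∀ x, f (f x) = x := by
    intro x
    have h := LinearMap.ext_iff.mp hcomp x
    simpa using h
  set E₁ : Submodule ℝ (Fin n → ℝ) := LinearMap.ker (f - LinearMap.id) with hE₁
  set E₂ : Submodule ℝ (Fin n → ℝ) := LinearMap.ker (f + LinearMap.id) with hE₂
  have hmem₁ : ∀ x, x ∈ E₁ ↔ f x = x := by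
    intro x; rw [hE₁, LinearMap.mem_ker, LinearMap.sub_apply, LinearMap.id_apply, sub_eq_zero]
  have hmem₂ : ∀ x, x ∈ E₂ ↔ f x = -x := by
    intro x
    rw [hE₂, LinearMap.mem_ker, LinearMap.add_apply, LinearMap.id_apply, add_eq_zero_iff_eq_neg]
  have hcompl : IsCompl E₁ E₂ := by
    constructor
    · rw [disjoint_iff_inf_le]
      intro x hx
      have h1 : f x = x := (hmem₁ x).mp hx.1
      have h2' : f x = -x := (hmem₂ x).mp hx.2
      have hxx : x = -x := h1.symm.trans h2'
      have h0 : (2 : ℝ) • x = 0 := by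
        rw [two_smul]; nth_rewrite 1 [hxx]; simp
      have := smul_eq_zero.mp h0
      simp only [OfNat.ofNat_ne_zero, false_or] at this
      simpa using this
    · rw [codisjoint_iff, Submodule.eq_top_iff']
      intro x
      have ha : x + f x ∈ E₁ := by
        rw [hmem₁, map_add, hff]; abel
      have hb : x - f x ∈ E₂ := by
        rw [hmem₂, map_sub, hff]; abel
      have hx : x = (2⁻¹ : ℝ) • ((x + f x) + (x - f x)) := by
        rw [show (x + f x) + (x - f x) = (2 : ℝ) • x by rw [two_smul]; abel,
          smul_smul]
        norm_num
      rw [hx]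
      exact Submodule.smul_mem _ _ (Submodule.add_mem_sup ha hb)
  set d₁ := Module.finrank ℝ E₁ with hd₁
  set d₂ := Module.finrank ℝ E₂ with hd₂
  have hsum : d₁ + d₂ = n := by
    rw [hd₁, hd₂, Submodule.finrank_add_eq_of_isCompl hcompl, Module.finrank_fin_fun]
  set b₁ : Module.Basis (Fin d₁) ℝ E₁ := Module.finBasis ℝ E₁ with hb₁
  set b₂ : Module.Basis (Fin d₂) ℝ E₂ := Module.finBasis ℝ E₂ with hb₂
  set b : Module.Basis (Fin d₁ ⊕ Fin d₂) ℝ (Fin n → ℝ) :=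
    (b₁.prod b₂).map (Submodule.prodEquivOfIsCompl E₁ E₂ hcompl) with hb
  have hbl : ∀ i : Fin d₁, b (Sum.inl i) = (b₁ i : Fin n → ℝ) := by
    intro i
    have hpl : (b₁.prod b₂) (Sum.inl i) = (b₁ i, 0) :=
      Prod.ext (b₁.prod_apply_inl_fst b₂ i) (b₁.prod_apply_inl_snd b₂ i)
    rw [hb, Module.Basis.map_apply, hpl, Submodule.coe_prodEquivOfIsCompl']
    simp
  have hbr : ∀ j : Fin d₂, b (Sum.inr j) = (b₂ j : Fin n → ℝ) := by
    intro j
    have hpr : (b₁.prod b₂) (Sum.inr j) = (0, b₂ j) :=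
      Prod.ext (b₁.prod_apply_inr_fst b₂ j) (b₁.prod_apply_inr_snd b₂ j)
    rw [hb, Module.Basis.map_apply, hpr, Submodule.coe_prodEquivOfIsCompl']
    simp
  set dsum : Fin d₁ ⊕ Fin d₂ → ℝ := Sum.elim (fun _ => 1) (fun _ => -1) with hdsum
  have hD : LinearMap.toMatrix b b f = Matrix.diagonal dsum := by
    ext i j
    rw [LinearMap.toMatrix_apply]
    rcases j with j | j
    · rw [show f (b (Sum.inl j)) = b (Sum.inl j) from by
        rw [hbl]; exact (hmem₁ _).mp (b₁ j).2, Module.Basis.repr_self]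
      rw [Finsupp.single_apply, Matrix.diagonal_apply, hdsum]
      rcases i with i | i
      · by_cases hji : j = i
        · subst hji; rw [if_pos rfl, if_pos rfl, Sum.elim_inl]
        · rw [if_neg (by simpa using hji), if_neg (by simpa using Ne.symm hji)]
      · rw [if_neg (by simp), if_neg (by simp)]
    · rw [show f (b (Sum.inr j)) = -(b (Sum.inr j)) from by
        rw [hbr]; exact (hmem₂ _).mp (b₂ j).2, map_neg, Module.Basis.repr_self]
      simp only [Finsupp.coe_neg, Pi.neg_apply]
      rw [Finsupp.single_apply, Matrix.diagonal_apply, hdsum]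
      rcases i with i | i
      · rw [if_neg (by simp), if_neg (by simp), neg_zero]
      · by_cases hji : j = i
        · subst hji; rw [if_pos rfl, if_pos rfl, Sum.elim_inr]
        · rw [if_neg (by simpa using hji), if_neg (by simpa using Ne.symm hji), neg_zero]
  have htrD : (Matrix.diagonal dsum).trace = (d₁ : ℝ) - (d₂ : ℝ) := by
    rw [Matrix.trace_diagonal, Fintype.sum_sum_type]
    simp [hdsum, sub_eq_add_neg]
  have e1 : LinearMap.trace ℝ (Fin n → ℝ) f = A.trace := by
    rw [LinearMap.trace_eq_matrix_trace ℝ (Pi.basisFun ℝ (Fin n)) f]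
    congr 1
    rw [LinearMap.toMatrix_eq_toMatrix']
    exact LinearMap.toMatrix'_toLin' A
  have htrA : A.trace = (d₁ : ℝ) - (d₂ : ℝ) := by
    rw [← e1, LinearMap.trace_eq_matrix_trace ℝ b f, hD, htrD]
  have hd₁k : d₁ = k := by
    have h1 : (d₁ : ℝ) - (d₂ : ℝ) = 2 * (k : ℝ) - (n : ℝ) := by rw [← htrA, htr]
    have h2' : (d₁ : ℝ) + (d₂ : ℝ) = (n : ℝ) := by exact_mod_cast congrArg Nat.cast hsum
    have : (d₁ : ℝ) = (k : ℝ) := by linarith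
    exact_mod_cast this
  set e : Fin d₁ ⊕ Fin d₂ ≃ Fin n := finSumFinEquiv.trans (finCongr hsum) with he
  set pib := Pi.basisFun ℝ (Fin n) with hpib
  set T : Matrix (Fin n) (Fin n) ℝ := (b.toMatrix pib).submatrix e.symm id with hT
  set S : Matrix (Fin n) (Fin n) ℝ := (pib.toMatrix b).submatrix id e.symm with hS
  have hST : S * T = 1 := by
    rw [hS, hT, Matrix.submatrix_mul_equiv (pib.toMatrix b) (b.toMatrix pib) id e.symm id,
      Module.Basis.toMatrix_mul_toMatrix_flip, Matrix.submatrix_id_id]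
  have hTS : T * S = 1 := by
    have h := Matrix.submatrix_mul_equiv (b.toMatrix pib) (pib.toMatrix b)
      (e.symm : Fin n → Fin d₁ ⊕ Fin d₂) (Equiv.refl (Fin n))
      (e.symm : Fin n → Fin d₁ ⊕ Fin d₂)
    rw [hT, hS]
    calc (b.toMatrix pib).submatrix (⇑e.symm) id * (pib.toMatrix b).submatrix id ⇑e.symm
        = (b.toMatrix pib * pib.toMatrix b).submatrix (⇑e.symm) ⇑e.symm := by
          exact h
      _ = 1 := by rw [Module.Basis.toMatrix_mul_toMatrix_flip, Matrix.submatrix_one_equiv]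
  have hTunit : IsUnit T := by
    have : Invertible T := invertibleOfLeftInverse T S hST
    exact isUnit_of_invertible T
  have hTinv : T⁻¹ = S := Matrix.inv_eq_right_inv hTS
  refine ⟨T, hTunit, ?_⟩
  rw [hTinv]
  have hdiag : (fun i : Fin n => if i.val < k then (1 : ℝ) else -1) = dsum ∘ ⇑e.symm := by
    funext i
    simp only [Function.comp_apply]
    rcases h : e.symm i with a | a
    · have hi : i = e (Sum.inl a) := by rw [← h, Equiv.apply_symm_apply]
      have hiv : i.val = a.val := by rw [hi, he]; simp
      have hal := a.isLt
      rw [if_pos (by omega), hdsum, Sum.elim_inl]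
    · have hi : i = e (Sum.inr a) := by rw [← h, Equiv.apply_symm_apply]
      have hiv : i.val = d₁ + a.val := by rw [hi, he]; simp
      rw [if_neg (by omega), hdsum, Sum.elim_inr]
  rw [hdiag]
  have hsub : Matrix.diagonal (dsum ∘ ⇑e.symm)
      = (Matrix.diagonal dsum).submatrix ⇑e.symm ⇑e.symm :=
    (Matrix.submatrix_diagonal_equiv dsum e.symm).symm
  rw [hsub, hS, hT,
    Matrix.submatrix_mul_equiv (pib.toMatrix b) (Matrix.diagonal dsum) id e.symm ⇑e.symm,
    Matrix.submatrix_mul_equiv (pib.toMatrix b * Matrix.diagonal dsum) (b.toMatrix pib)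
      id e.symm id,
    Matrix.submatrix_id_id, ← hD,
    basis_toMatrix_mul_linearMap_toMatrix_mul_basis_toMatrix,
    LinearMap.toMatrix_eq_toMatrix']
  exact (LinearMap.toMatrix'_toLin' A).symm

/-- For `m` even, `σ := q^{-m/2}·g` is conjugate (by an invertible real matrix `T`) to the
diagonal matrix `diag(1,…,1,−1,…,−1)` with `m/2+1` entries `1` and `m/2` entries `−1`. -/
theorem sigma_conjugate_diagonal (q m : ℕ) (hq : 2 ≤ q) (hm : 0 < m) (hme : Even m) :
    ∃ T : Matrix (Fin (m + 1)) (Fin (m + 1)) ℝ, IsUnit T ∧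
      (((q : ℝ) ^ (m / 2))⁻¹ • gMat q m) =
        T⁻¹ * Matrix.diagonal (fun i : Fin (m + 1) =>
          if i.val ≤ m / 2 then (1 : ℝ) else -1) * T := by
  have hq0 : (0 : ℝ) < (q : ℝ) := by exact_mod_cast (by omega : 0 < q)
  have hqp : (0 : ℝ) < (q : ℝ) ^ (m / 2) := by positivity
  have hdvd : 2 ∣ m := hme.two_dvd
  have hm2 : m / 2 + m / 2 = m := by omega
  set c : ℝ := ((q : ℝ) ^ (m / 2))⁻¹ with hc
  set A := c • gMat q m with hA
  have hA2 : A * A = 1 := by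
    rw [hA, Matrix.smul_mul, Matrix.mul_smul, gMat_mul_gMat, smul_smul, smul_smul]
    have hcc : c * c * (q : ℝ) ^ m = 1 := by
      rw [show (q : ℝ) ^ m = (q : ℝ) ^ (m / 2) * (q : ℝ) ^ (m / 2) by rw [← pow_add, hm2], hc]
      field_simp
    rw [hcc, one_smul]
  have htr : A.trace = 2 * ((m / 2 + 1 : ℕ) : ℝ) - ((m + 1 : ℕ) : ℝ) := by
    rw [hA, Matrix.trace_smul, gMat_trace q m hme, smul_eq_mul, hc,
      inv_mul_cancel₀ (ne_of_gt hqp)]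
    push_cast
    have : ((m / 2 : ℕ) : ℝ) * 2 = (m : ℝ) := by exact_mod_cast Nat.div_mul_cancel hdvd
    linarith
  obtain ⟨T, hT, hconj⟩ := invol_conj A hA2 htr
  refine ⟨T, hT, ?_⟩
  have hfun : (fun i : Fin (m + 1) => if i.val ≤ m / 2 then (1 : ℝ) else -1)
      = fun i : Fin (m + 1) => if i.val < m / 2 + 1 then (1 : ℝ) else -1 := by
    funext i
    simp [Nat.lt_succ_iff]
  rw [hfun]
  exact hconj
end

section
/- In the polynomial ring ℂ[x_0,x_1,x_2], the three polynomials f_1 := x_0 + x_2, f_2 := x_0² + x_1² + 2x_2², and f_3 := x_0³ + 3x_0x_2² + 3x_1²x_2 + x_2³ are algebraically independent over ℂ. -/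
open MvPolynomial

noncomputable def f1 : MvPolynomial (Fin 3) ℂ := X 0 + X 2
noncomputable def f2 : MvPolynomial (Fin 3) ℂ := X 0 ^ 2 + X 1 ^ 2 + 2 * X 2 ^ 2
noncomputable def f3 : MvPolynomial (Fin 3) ℂ :=
  X 0 ^ 3 + 3 * X 0 * X 2 ^ 2 + 3 * X 1 ^ 2 * X 2 + X 2 ^ 3

/-- auxiliary cubic in the separated variable -/
noncomputable def uu : Polynomial (MvPolynomial (Fin 2) ℂ) :=
  Polynomial.C (-12 : MvPolynomial (Fin 2) ℂ) * Polynomial.X ^ 3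
    + Polynomial.C (12 * X 1) * Polynomial.X ^ 2
    + Polynomial.C (3 * X 0 - 6 * X 1 ^ 2) * Polynomial.X
    + Polynomial.C ((X 1) ^ 3)

noncomputable def ww : MvPolynomial (Fin 3) ℂ :=
  X 0 ^ 3 - 6 * X 0 ^ 2 * X 2 + 12 * X 0 * X 2 ^ 2 - 12 * X 2 ^ 3 + 3 * X 1 * X 2

lemma neg12_ne : (-12 : MvPolynomial (Fin 2) ℂ) ≠ 0 := by
  intro h
  have h2 : (MvPolynomial.C (-12 : ℂ) : MvPolynomial (Fin 2) ℂ) = MvPolynomial.C (0 : ℂ) := by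
    rw [map_zero, ← h]; simp only [map_neg, map_ofNat]
  have := MvPolynomial.C_injective (Fin 2) ℂ h2
  norm_num at this

noncomputable def e3 : MvPolynomial (Fin 3) ℂ ≃ₐ[ℂ] Polynomial (MvPolynomial (Fin 2) ℂ) :=
  (renameEquiv ℂ (Equiv.swap 0 2)).trans (MvPolynomial.finSuccEquiv ℂ 2)

lemma uu_trans : Transcendental (MvPolynomial (Fin 2) ℂ) uu := by
  refine Polynomial.transcendental _ ?_ ?_
  · rw [uu, Polynomial.natDegree_cubic neg12_ne]; norm_num
  · rw [uu, Polynomial.leadingCoeff_cubic neg12_ne]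
    exact mem_nonZeroDivisors_of_ne_zero neg12_ne

/-- The polynomials `f₁ = x₀ + x₂`, `f₂ = x₀² + x₁² + 2x₂²`, and
`f₃ = x₀³ + 3x₀x₂² + 3x₁²x₂ + x₂³` are algebraically independent over `ℂ`. -/
theorem f1_f2_f3_algebraicIndependent :
    AlgebraicIndependent ℂ ![f1, f2, f3] := by
  classical
  have hX2 : AlgebraicIndependent ℂ (X : Fin 2 → MvPolynomial (Fin 2) ℂ) :=
    MvPolynomial.algebraicIndependent_X _ _
  have hCinj : Function.Injective
      (Polynomial.CAlgHom (R := ℂ) (A := MvPolynomial (Fin 2) ℂ)) := Polynomial.C_injective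
  -- base family `![C (X 1), C (X 0)]`
  have base2 : AlgebraicIndependent ℂ
      ![(Polynomial.C (X 1 : MvPolynomial (Fin 2) ℂ) : Polynomial (MvPolynomial (Fin 2) ℂ)),
        Polynomial.C (X 0)] := by
    have h := (hX2.comp (Equiv.swap 0 1) (Equiv.injective _)).map'
      (f := Polynomial.CAlgHom (R := ℂ)) hCinj
    convert h using 1
    funext i
    fin_cases i <;> simp [Polynomial.CAlgHom, Equiv.swap_apply_def]
  -- transcendence of uu over the adjoin
  have hBsub : Transcendental
      ((Polynomial.CAlgHom (R := ℂ) (A := MvPolynomial (Fin 2) ℂ)).range : Subalgebra ℂ _) uu := by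
    have h := transcendental_ringHom_iff_of_comp_eq
      (f := (AlgEquiv.ofInjective _ hCinj :
        MvPolynomial (Fin 2) ℂ ≃ₐ[ℂ] (Polynomial.CAlgHom (R := ℂ)
          (A := MvPolynomial (Fin 2) ℂ)).range))
      (g := RingHom.id (Polynomial (MvPolynomial (Fin 2) ℂ)))
      Function.injective_id (RingHom.ext fun s => by
        rfl) (a := uu)
    exact h.mpr uu_trans
  have htrans : Transcendental (Algebra.adjoin ℂ (Set.range
      ![(Polynomial.C (X 1 : MvPolynomial (Fin 2) ℂ) : Polynomial (MvPolynomial (Fin 2) ℂ)),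
        Polynomial.C (X 0)])) uu := by
    refine Transcendental.of_tower_top_of_subalgebra_le ?_ hBsub
    refine Algebra.adjoin_le ?_
    rintro x ⟨i, rfl⟩
    fin_cases i
    · exact ⟨X 1, rfl⟩
    · exact ⟨X 0, rfl⟩
  have hopt := (base2.option_iff_transcendental uu).2 htrans
  have h4 := hopt.comp (![some 0, some 1, none] : Fin 3 → Option (Fin 2)) (by decide)
  -- pull back through the algebra equivalence
  have hcomp : (⇑e3.toAlgHom ∘ ![X 0, X 1, ww]) =
      ((fun o : Option (Fin 2) => o.elim uu
        ![(Polynomial.C (X 1 : MvPolynomial (Fin 2) ℂ) : Polynomial (MvPolynomial (Fin 2) ℂ)),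
          Polynomial.C (X 0)]) ∘ (![some 0, some 1, none] : Fin 3 → Option (Fin 2))) := by
    have h2 : (2 : Fin 3) = Fin.succ 1 := rfl
    have h1 : (1 : Fin 3) = Fin.succ 0 := rfl
    have s0 : (Equiv.swap (0 : Fin 3) 2) 0 = 2 := rfl
    have s1 : (Equiv.swap (0 : Fin 3) 2) 1 = 1 := rfl
    have s2 : (Equiv.swap (0 : Fin 3) 2) 2 = 0 := rfl
    funext i
    fin_cases i
    · show e3 (X 0) = _
      rw [e3, AlgEquiv.trans_apply, renameEquiv_apply, rename_X, s0, h2, finSuccEquiv_X_succ]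
      simp
    · show e3 (X 1) = _
      rw [e3, AlgEquiv.trans_apply, renameEquiv_apply, rename_X, s1, h1, finSuccEquiv_X_succ]
      simp
    · show e3 ww = uu
      rw [e3]
      simp only [ww, uu, map_add, map_sub, map_mul, map_pow, map_ofNat,
        AlgEquiv.trans_apply, renameEquiv_apply, rename_X, s0, s1, s2]
      rw [h2, h1]
      simp only [finSuccEquiv_X_succ, finSuccEquiv_X_zero, map_ofNat, map_neg]
      ring
  have h5 : AlgebraicIndependent ℂ ![(X 0 : MvPolynomial (Fin 3) ℂ), X 1, ww] :=
    (AlgHom.algebraicIndependent_iff e3.toAlgHom e3.injective).1 (by rw [hcomp]; exact h4)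
  -- chain of injective endomorphisms
  let τ : MvPolynomial (Fin 3) ℂ →ₐ[ℂ] MvPolynomial (Fin 3) ℂ := aeval ![X 0 + X 2, X 1, X 2]
  let τ' : MvPolynomial (Fin 3) ℂ →ₐ[ℂ] MvPolynomial (Fin 3) ℂ := aeval ![X 0 - X 2, X 1, X 2]
  have hτc : τ'.comp τ = AlgHom.id ℂ _ := by
    apply MvPolynomial.algHom_ext
    intro i
    fin_cases i <;> simp [τ, τ', map_ofNat, Matrix.cons_val_two, Matrix.tail_cons] <;> ring
  have hτ : Function.Injective τ :=
    Function.LeftInverse.injective (g := τ') fun p => by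
      rw [← AlgHom.comp_apply, hτc, AlgHom.id_apply]
  let σh : MvPolynomial (Fin 3) ℂ →ₐ[ℂ] MvPolynomial (Fin 3) ℂ :=
    aeval ![X 0, X 1 + X 0 ^ 2 + 2 * X 2 ^ 2, X 2]
  let σh' : MvPolynomial (Fin 3) ℂ →ₐ[ℂ] MvPolynomial (Fin 3) ℂ :=
    aeval ![X 0, X 1 - X 0 ^ 2 - 2 * X 2 ^ 2, X 2]
  have hσc : σh'.comp σh = AlgHom.id ℂ _ := by
    apply MvPolynomial.algHom_ext
    intro i
    fin_cases i <;> simp [σh, σh', map_ofNat, Matrix.cons_val_two, Matrix.tail_cons] <;> ring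
  have hσ : Function.Injective σh :=
    Function.LeftInverse.injective (g := σh') fun p => by
      rw [← AlgHom.comp_apply, hσc, AlgHom.id_apply]
  let φ1 : MvPolynomial (Fin 3) ℂ →ₐ[ℂ] MvPolynomial (Fin 3) ℂ := aeval ![X 0, X 1 ^ 2, X 2]
  have hsq : AlgebraicIndependent ℂ ![(X 0 : MvPolynomial (Fin 3) ℂ), X 1 ^ 2, X 2] := by
    have h : ∀ _ : (∀ i : Fin 3, Transcendental ℂ ((![Polynomial.X, Polynomial.X ^ 2,
        Polynomial.X] : Fin 3 → Polynomial ℂ) i)), AlgebraicIndependent ℂ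
        fun i : Fin 3 => Polynomial.aeval (X i : MvPolynomial (Fin 3) ℂ)
          (![Polynomial.X, Polynomial.X ^ 2, Polynomial.X] i) :=
      fun hh => MvPolynomial.algebraicIndependent_polynomial_aeval_X _ hh
    refine (fun h => ?_) (h ?_)
    · convert h using 1
      funext i
      fin_cases i <;> simp
    · have htr2 : Transcendental ℂ (Polynomial.X ^ 2 : Polynomial ℂ) := by
        refine Polynomial.transcendental _ (by simp) ?_
        rw [Polynomial.leadingCoeff_X_pow]
        exact one_mem _
      intro i
      fin_cases i <;>
        simp only [Matrix.cons_val_zero, Matrix.cons_val_one, Matrix.head_cons,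
          Matrix.cons_val_two, Matrix.tail_cons] <;>
        first
          | exact Polynomial.transcendental_X ℂ
          | exact htr2
  have hφ1 : Function.Injective φ1 := algebraicIndependent_iff_injective_aeval.1 hsq
  let Φ : MvPolynomial (Fin 3) ℂ →ₐ[ℂ] MvPolynomial (Fin 3) ℂ := φ1.comp (σh.comp τ)
  have hΦ : Function.Injective Φ := by
    have : ⇑Φ = ⇑φ1 ∘ ⇑σh ∘ ⇑τ := by funext p; simp [Φ]
    rw [this]
    exact hφ1.comp (hσ.comp hτ)
  have hfinal := h5.map' (f := Φ) hΦ
  have heq : ⇑Φ ∘ ![(X 0 : MvPolynomial (Fin 3) ℂ), X 1, ww] = ![f1, f2, f3] := by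
    funext i
    fin_cases i <;>
      simp [Φ, φ1, σh, τ, ww, f1, f2, f3, map_add, map_sub, map_mul, map_pow, map_ofNat,
        Matrix.cons_val_two, Matrix.tail_cons] <;>
      ring
  rw [← heq]
  exact hfinal
end
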